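/- Let Ω ⊂ ℝ³ be open with x₀ ∈ ∂Ω, v₀ ∈ ℝ³ \ {0}, and suppose t_b(x₀, v₀) > t₀ > 0, i.e. the open segment {x₀ − s v₀ : 0 < s < t₀} is contained in Ω and the closed segment meets ∂Ω only at x₀. Then for every sufficiently small ε > 0 there exist ϱ > 0 and N ∈ ℕ such that the tube ⋃_{s∈[0,t₀]} B(x₀ − s v₀; ϱ) meets ∂Ω only inside B(x₀; ε), and for every (x,v) ∈ B((x₀,v₀); 1/N): if x_b(x,v) ∉ B(x₀; ε) then t_b(x,v) > t₀. -/

import Mathlib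

/-- Backward exit time. -/
noncomputable def backwardExitTime (Ω : Set (EuclideanSpace ℝ (Fin 3)))
    (x v : EuclideanSpace ℝ (Fin 3)) : ℝ :=
  sSup ({0} ∪ {τ : ℝ | 0 < τ ∧ ∀ s : ℝ, 0 < s → s < τ → x - s • v ∈ Ω})

/-- Backward exit position. -/
noncomputable def backwardExitPos (Ω : Set (EuclideanSpace ℝ (Fin 3)))
    (x v : EuclideanSpace ℝ (Fin 3)) : EuclideanSpace ℝ (Fin 3) :=
  x - backwardExitTime Ω x v • v

/-- Statement (canreachthere): if the backward trajectory from (x₀,v₀) stays inside Ω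
for time t₀ except at x₀ itself, then for ε small there are ϱ > 0 and N ∈ ℕ such that
the tube of radius ϱ around the segment meets ∂Ω only inside B(x₀,ε), and any
(x,v) ∈ B((x₀,v₀);1/N) whose backward exit position avoids B(x₀,ε) has
backward exit time greater than t₀. -/
theorem nearby_trajectories_survive
    (Ω : Set (EuclideanSpace ℝ (Fin 3))) (hΩ : IsOpen Ω)
    (x₀ v₀ : EuclideanSpace ℝ (Fin 3)) (hx₀ : x₀ ∈ frontier Ω) (hv₀ : v₀ ≠ 0)
    (t₀ : ℝ) (ht₀ : 0 < t₀)
    (hseg : ∀ s : ℝ, 0 < s → s < t₀ → x₀ - s • v₀ ∈ Ω)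
    (hfr : ∀ s : ℝ, 0 ≤ s → s ≤ t₀ → x₀ - s • v₀ ∈ frontier Ω → s = 0) :
    ∃ ε₀ > 0, ∀ ε : ℝ, 0 < ε → ε ≤ ε₀ →
      ∃ ϱ > 0, ∃ N : ℕ, 0 < N ∧
        ((⋃ s ∈ Set.Icc (0 : ℝ) t₀, Metric.ball (x₀ - s • v₀) ϱ) ∩ frontier Ω ⊆
          Metric.ball x₀ ε) ∧
        ∀ x v : EuclideanSpace ℝ (Fin 3),
          dist x x₀ < 1 / N → dist v v₀ < 1 / N →
          backwardExitPos Ω x v ∉ Metric.ball x₀ ε →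
          t₀ < backwardExitTime Ω x v := by
  have hv₀' : (0:ℝ) < ‖v₀‖ := norm_pos_iff.mpr hv₀
  -- the endpoint is in Ω
  have hf₀ : Continuous (fun s : ℝ => x₀ - s • v₀) :=
    continuous_const.sub (continuous_id.smul continuous_const)
  have hend : x₀ - t₀ • v₀ ∈ Ω := by
    have hcl : x₀ - t₀ • v₀ ∈ closure Ω := by
      have h1 : t₀ ∈ closure (Set.Ioo (0:ℝ) t₀) := by
        rw [closure_Ioo ht₀.ne]; exact Set.right_mem_Icc.mpr ht₀.le
      have h2 : (fun s : ℝ => x₀ - s • v₀) '' closure (Set.Ioo (0:ℝ) t₀) ⊆ closure Ω := by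
        refine (image_closure_subset_closure_image hf₀).trans (closure_mono ?_)
        rintro _ ⟨s, ⟨hs1, hs2⟩, rfl⟩
        exact hseg s hs1 hs2
      exact h2 ⟨t₀, h1, rfl⟩
    have hnfr : x₀ - t₀ • v₀ ∉ frontier Ω := fun h =>
      absurd (hfr t₀ ht₀.le le_rfl h) ht₀.ne'
    rw [← hΩ.interior_eq]
    by_contra h
    exact hnfr ⟨hcl, h⟩
  have hseg' : ∀ s : ℝ, 0 < s → s ≤ t₀ → x₀ - s • v₀ ∈ Ω := fun s hs hst => by
    rcases lt_or_eq_of_le hst with h | h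
    · exact hseg s hs h
    · rw [h]; exact hend
  refine ⟨1, one_pos, fun ε hε hε1 => ?_⟩
  set δ : ℝ := min (ε / (2 * ‖v₀‖)) (t₀ / 2) with hδdef
  have hδpos : 0 < δ := lt_min (by positivity) (by positivity)
  have hδt₀ : δ ≤ t₀ := (min_le_right _ _).trans (by linarith)
  -- compact core of the segment
  have hK : IsCompact ((fun s : ℝ => x₀ - s • v₀) '' Set.Icc δ t₀) :=
    (isCompact_Icc).image hf₀
  have hKΩ : (fun s : ℝ => x₀ - s • v₀) '' Set.Icc δ t₀ ⊆ Ω := by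
    rintro _ ⟨s, ⟨hs1, hs2⟩, rfl⟩
    exact hseg' s (hδpos.trans_le hs1) hs2
  obtain ⟨ϱ₀, hϱ₀pos, hϱ₀⟩ := hK.exists_thickening_subset_open hΩ hKΩ
  set ϱ : ℝ := min (ε / 4) ϱ₀ with hϱdef
  have hϱpos : 0 < ϱ := lt_min (by positivity) hϱ₀pos
  -- tube property
  have htube : (⋃ s ∈ Set.Icc (0 : ℝ) t₀, Metric.ball (x₀ - s • v₀) ϱ) ∩ frontier Ω ⊆
      Metric.ball x₀ ε := by
    rintro y ⟨hy1, hy2⟩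
    simp only [Set.mem_iUnion] at hy1
    obtain ⟨s, ⟨hs0, hst⟩, hys⟩ := hy1
    rcases lt_or_ge s δ with hsδ | hsδ
    · have h1 : dist (x₀ - s • v₀) x₀ = s * ‖v₀‖ := by
        rw [dist_eq_norm]
        simp [norm_smul, abs_of_nonneg hs0]
      have h2 : s * ‖v₀‖ ≤ ε / 2 := by
        have : s ≤ ε / (2 * ‖v₀‖) := hsδ.le.trans (min_le_left _ _)
        calc s * ‖v₀‖ ≤ (ε / (2 * ‖v₀‖)) * ‖v₀‖ := by nlinarith
          _ = ε / 2 := by field_simp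
      have := Metric.mem_ball.mp hys
      have hϱε : ϱ ≤ ε / 4 := min_le_left _ _
      rw [Metric.mem_ball]
      calc dist y x₀ ≤ dist y (x₀ - s • v₀) + dist (x₀ - s • v₀) x₀ := dist_triangle _ _ _
        _ < ϱ + ε / 2 := by linarith [h1 ▸ h2]
        _ ≤ ε / 4 + ε / 2 := by linarith
        _ < ε := by linarith
    · exfalso
      have hyΩ : y ∈ Ω := by
        apply hϱ₀
        apply Metric.mem_thickening_iff.mpr
        exact ⟨x₀ - s • v₀, ⟨s, ⟨hsδ, hst⟩, rfl⟩, (Metric.mem_ball.mp hys).trans_le (min_le_right _ _)⟩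
      exact (hΩ.frontier_eq ▸ hy2).2 (hΩ.interior_eq ▸ hyΩ)
  -- choose N
  obtain ⟨N, hN⟩ := exists_nat_gt (max ((1 + t₀) / ϱ) (1 / ε))
  have hNR : (0:ℝ) < N :=
    lt_of_lt_of_le (by positivity) ((le_max_right ((1+t₀)/ϱ) (1/ε)).trans hN.le)
  have hNpos : 0 < N := by exact_mod_cast hNR
  have hNε : 1 / (N:ℝ) < ε := by
    rw [div_lt_iff₀ hNR]
    have h1 : 1 / ε < (N:ℝ) := (le_max_right ((1+t₀)/ϱ) (1/ε)).trans_lt hN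
    rw [div_lt_iff₀ hε] at h1
    nlinarith
  have hNϱ : (1 + t₀) / (N:ℝ) < ϱ := by
    have h1 : (1 + t₀) / ϱ < (N:ℝ) := (le_max_left _ _).trans_lt hN
    rw [div_lt_iff₀ hϱpos] at h1
    rw [div_lt_iff₀ hNR]
    nlinarith
  refine ⟨ϱ, hϱpos, N, hNpos, htube, fun x v hx hv hexit => ?_⟩
  -- closeness of trajectories
  have hclose : ∀ s : ℝ, 0 ≤ s → s ≤ t₀ → dist (x - s • v) (x₀ - s • v₀) < ϱ := by
    intro s hs0 hst
    calc dist (x - s • v) (x₀ - s • v₀) ≤ dist x x₀ + dist (s • v) (s • v₀) :=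
          dist_sub_sub_le _ _ _ _
      _ = dist x x₀ + |s| * dist v v₀ := by rw [dist_smul₀]; simp [Real.norm_eq_abs]
      _ ≤ dist x x₀ + t₀ * dist v v₀ := by
          have : |s| = s := abs_of_nonneg hs0
          have hd : 0 ≤ dist v v₀ := dist_nonneg
          nlinarith
      _ < 1 / N + t₀ * (1 / N) := by
          have hd : (0:ℝ) ≤ t₀ := ht₀.le
          nlinarith
      _ = (1 + t₀) / N := by ring
      _ < ϱ := hNϱ
  set S : Set ℝ := {0} ∪ {τ : ℝ | 0 < τ ∧ ∀ s : ℝ, 0 < s → s < τ → x - s • v ∈ Ω} with hSdef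
  have hS0 : (0:ℝ) ∈ S := Or.inl rfl
  have hTnonneg : 0 ≤ backwardExitTime Ω x v := by
    apply Real.sSup_nonneg
    rintro τ (rfl | ⟨hτ, -⟩)
    · exact le_rfl
    · exact hτ.le
  by_contra hcon
  push_neg at hcon
  set T : ℝ := backwardExitTime Ω x v with hTdef
  rcases eq_or_lt_of_le hTnonneg with hT0 | hTpos
  · -- T = 0 : exit pos is x itself, which is within ε of x₀
    apply hexit
    rw [Metric.mem_ball]
    have : backwardExitPos Ω x v = x := by
      rw [backwardExitPos, ← hTdef, ← hT0]; simp
    rw [this]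
    exact hx.trans hNε
  · -- 0 < T ≤ t₀ : exit pos is on the frontier inside the tube
    have hbdd : BddAbove S := by
      by_contra hb
      have h0 : sSup S = 0 := Real.sSup_of_not_bddAbove hb
      have hTS : T = sSup S := rfl
      rw [hTS, h0] at hTpos
      exact lt_irrefl 0 hTpos
    have hin : ∀ s : ℝ, 0 < s → s < T → x - s • v ∈ Ω := by
      intro s hs hsT
      obtain ⟨τ, hτS, hsτ⟩ := exists_lt_of_lt_csSup ⟨0, hS0⟩ hsT
      rcases hτS with rfl | ⟨hτ, hτin⟩
      · exact absurd hs (not_lt.mpr hsτ.le)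
      · exact hτin s hs hsτ
    have hcl : x - T • v ∈ closure Ω := by
      have hfc : Continuous (fun s : ℝ => x - s • v) :=
        continuous_const.sub (continuous_id.smul continuous_const)
      have h1 : T ∈ closure (Set.Ioo (0:ℝ) T) := by
        rw [closure_Ioo hTpos.ne]; exact Set.right_mem_Icc.mpr hTpos.le
      have h2 : (fun s : ℝ => x - s • v) '' closure (Set.Ioo (0:ℝ) T) ⊆ closure Ω := by
        refine (image_closure_subset_closure_image hfc).trans (closure_mono ?_)
        rintro _ ⟨s, ⟨hs1, hs2⟩, rfl⟩
        exact hin s hs1 hs2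
      exact h2 ⟨T, h1, rfl⟩
    have hnot : x - T • v ∉ Ω := by
      intro hmem
      have hfc : Continuous (fun s : ℝ => x - s • v) :=
        continuous_const.sub (continuous_id.smul continuous_const)
      have hopen : IsOpen ((fun s : ℝ => x - s • v) ⁻¹' Ω) := hΩ.preimage hfc
      obtain ⟨η, hηpos, hη⟩ := Metric.isOpen_iff.mp hopen T hmem
      have hmemS : T + η / 2 ∈ S := by
        refine Or.inr ⟨by linarith, fun s hs hsT => ?_⟩
        rcases lt_or_ge s T with h | h
        · exact hin s hs h
        · apply hη
          rw [Metric.mem_ball, Real.dist_eq, abs_of_nonneg (by linarith)]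
          linarith
      have h2 : T + η / 2 ≤ T := le_csSup hbdd hmemS
      linarith
    have hfront : x - T • v ∈ frontier Ω := by
      rw [hΩ.frontier_eq]
      exact ⟨hcl, hΩ.interior_eq ▸ hnot⟩
    apply hexit
    apply htube
    refine ⟨?_, hfront⟩
    simp only [Set.mem_iUnion]
    exact ⟨T, ⟨hTnonneg, hcon⟩, Metric.mem_ball.mpr (hclose T hTnonneg hcon)⟩
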